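/- Let (Y,d) be an unbounded σ-totally bounded metric space. Then Y^ℕ with the product uniformity is not Menger bounded, although each finite power Y^n is σ-totally bounded (hence strictly Hurewicz bounded). -/

import Mathlib

open Filter Set

/-- A uniform space is ω-bounded if every entourage admits a countable set of
centers whose balls cover the space. -/
def OmegaBounded (Z : Type*) [UniformSpace Z] : Prop :=
  ∀ U ∈ uniformity Z, ∃ A : Set Z, A.Countable ∧ ∀ z : Z, ∃ a ∈ A, (a, z) ∈ U

/-- Menger boundedness of a uniform space. -/
def MengerBounded (Z : Type*) [UniformSpace Z] : Prop :=
  ∀ U : ℕ → Set (Z × Z), (∀ n, U n ∈ uniformity Z) →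
    ∃ F : ℕ → Finset Z, ∀ z : Z, ∃ n : ℕ, ∃ a ∈ F n, (a, z) ∈ U n

/-- Hurewicz boundedness of a uniform space. -/
def HurewiczBounded (Z : Type*) [UniformSpace Z] : Prop :=
  ∀ U : ℕ → Set (Z × Z), (∀ n, U n ∈ uniformity Z) →
    ∃ F : ℕ → Finset Z, ∀ z : Z, ∀ᶠ n in Filter.atTop, ∃ a ∈ F n, (a, z) ∈ U n

/-- Rothberger boundedness of a uniform space. -/
def RothbergerBounded (Z : Type*) [UniformSpace Z] : Prop :=
  ∀ U : ℕ → Set (Z × Z), (∀ n, U n ∈ uniformity Z) →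
    ∃ x : ℕ → Z, ∀ z : Z, ∃ n : ℕ, (x n, z) ∈ U n

/-- σ-total boundedness: the space is a countable union of totally bounded subsets. -/
def SigmaTotallyBounded (Z : Type*) [UniformSpace Z] : Prop :=
  ∃ S : ℕ → Set Z, (∀ n, TotallyBounded (S n)) ∧ (⋃ n, S n) = Set.univ

/-- The uniformity has a countable base. -/
def HasCountableUniformBase (Z : Type*) [UniformSpace Z] : Prop :=
  ∃ B : ℕ → Set (Z × Z), (∀ n, B n ∈ uniformity Z) ∧
    ∀ U ∈ uniformity Z, ∃ n, B n ⊆ U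

/-- A strategy for player TWO in the Menger boundedness game: given the entourages
played by ONE in the first `n+1` rounds, TWO answers with a finite set. -/
def MengerStrategy (Z : Type*) : Type _ :=
  ∀ n : ℕ, (Fin (n + 1) → Set (Z × Z)) → Finset Z

/-- The strategy `σ` is winning for TWO in the Menger boundedness game. -/
def MengerWinning {Z : Type*} [UniformSpace Z] (σ : MengerStrategy Z) : Prop :=
  ∀ U : ℕ → Set (Z × Z), (∀ n, U n ∈ uniformity Z) →
    ∀ z : Z, ∃ n : ℕ, ∃ a ∈ σ n (fun i => U i), (a, z) ∈ U n

/-- A strategy for player TWO in the Hurewicz boundedness game. -/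
def HurewiczStrategy (Z : Type*) : Type _ :=
  ∀ n : ℕ, (Fin (n + 1) → Set (Z × Z)) → Finset Z

/-- The strategy `σ` is winning for TWO in the Hurewicz boundedness game. -/
def HurewiczWinning {Z : Type*} [UniformSpace Z] (σ : HurewiczStrategy Z) : Prop :=
  ∀ U : ℕ → Set (Z × Z), (∀ n, U n ∈ uniformity Z) →
    ∀ z : Z, ∀ᶠ n in Filter.atTop, ∃ a ∈ σ n (fun i => U i), (a, z) ∈ U n

/-- A strategy for player TWO in the Rothberger boundedness game: TWO answers with a point. -/
def RothbergerStrategy (Z : Type*) : Type _ :=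
  ∀ n : ℕ, (Fin (n + 1) → Set (Z × Z)) → Z

/-- The strategy `σ` is winning for TWO in the Rothberger boundedness game. -/
def RothbergerWinning {Z : Type*} [UniformSpace Z] (σ : RothbergerStrategy Z) : Prop :=
  ∀ U : ℕ → Set (Z × Z), (∀ n, U n ∈ uniformity Z) →
    ∀ z : Z, ∃ n : ℕ, (σ n (fun i => U i), z) ∈ U n

open scoped Uniformity

/-- Products of totally bounded sets over a finite index type are totally bounded. -/
lemma totallyBounded_pi' {ι : Type*} [Finite ι] {α : ι → Type*} [∀ i, UniformSpace (α i)]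
    {s : ∀ i, Set (α i)} (h : ∀ i, TotallyBounded (s i)) :
    TotallyBounded (Set.pi univ s) := by
  classical
  intro d hd
  rw [Pi.uniformity, Filter.mem_iInf_of_finite] at hd
  obtain ⟨V, hV, rfl⟩ := hd
  have hW : ∀ i, ∃ W ∈ 𝓤 (α i), (fun a : (∀ i, α i) × (∀ i, α i) => (a.1 i, a.2 i)) ⁻¹' W ⊆ V i :=
    fun i => (Filter.mem_comap).1 (hV i)
  choose W hWmem hWsub using hW
  choose t ht hcov using fun i => h i (W i) (hWmem i)
  refine ⟨Set.pi univ t, Set.Finite.pi ht, ?_⟩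
  intro x hx
  have : ∀ i, ∃ y ∈ t i, (x i, y) ∈ W i := by
    intro i
    simpa using hcov i (hx i (mem_univ i))
  choose y hy hxy using this
  refine mem_iUnion₂.2 ⟨y, fun i _ => hy i, ?_⟩
  exact mem_iInter.2 fun i => hWsub i (hxy i)

/-- In an unbounded metric space, every finite set of points can be avoided at distance 1. -/
lemma exists_far {Y : Type*} [MetricSpace Y]
    (hunb : ¬ Bornology.IsBounded (Set.univ : Set Y)) (G : Finset Y) :
    ∃ z : Y, ∀ y ∈ G, 1 ≤ dist y z := by
  have hne : Nonempty Y := by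
    by_contra h
    exact hunb (by simp [Set.univ_eq_empty_iff.2 (not_nonempty_iff.1 h)])
  rcases G.eq_empty_or_nonempty with rfl | hG
  · exact ⟨Classical.arbitrary Y, by simp⟩
  obtain ⟨p, hp⟩ := hG
  set M : ℝ := G.sup' ⟨p, hp⟩ (fun y => dist p y) with hM
  have hsub : ¬ (Set.univ : Set Y) ⊆ Metric.closedBall p (1 + M) :=
    fun h => hunb ((Metric.isBounded_closedBall).subset h)
  obtain ⟨z, -, hz⟩ := Set.not_subset.1 hsub
  rw [Metric.mem_closedBall, not_le] at hz
  refine ⟨z, fun y hy => ?_⟩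
  have h1 : dist p y ≤ M := Finset.le_sup' _ hy
  have h2 : dist z p ≤ dist z y + dist y p := dist_triangle _ _ _
  have h3 : dist z p = dist p z := dist_comm _ _
  have h4 : dist y z = dist z y := dist_comm _ _
  have h5 : dist y p = dist p y := dist_comm _ _
  linarith

/-- σ-totally bounded spaces admit a winning Hurewicz strategy. -/
lemma exists_hurewiczWinning {Z : Type*} [UniformSpace Z] (h : SigmaTotallyBounded Z) :
    ∃ σ : HurewiczStrategy Z, HurewiczWinning σ := by
  classical
  obtain ⟨S, hS, hU⟩ := h
  set A : ℕ → Set Z := Set.accumulate S with hA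
  have hAtb : ∀ k, TotallyBounded (A k) := by
    intro k
    have : A k = ⋃ i ∈ Set.Iic k, S i := rfl
    rw [this]
    exact (totallyBounded_biUnion (Set.finite_Iic k)).2 fun i _ => hS i
  have hAuniv : (⋃ k, A k) = Set.univ := by
    rw [hA, Set.iUnion_accumulate, hU]
  have key : ∀ (k : ℕ) (U : Set (Z × Z)), U ∈ uniformity Z →
      ∃ F : Finset Z, ∀ z ∈ A k, ∃ a ∈ F, (a, z) ∈ U := by
    intro k U hUm
    have hsymm : Prod.swap ⁻¹' U ∈ uniformity Z := tendsto_swap_uniformity hUm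
    obtain ⟨t, ht, hsub⟩ := hAtb k _ hsymm
    refine ⟨ht.toFinset, fun z hz => ?_⟩
    obtain ⟨y, hy, hzy⟩ := Set.mem_iUnion₂.1 (hsub hz)
    exact ⟨y, ht.mem_toFinset.2 hy, hzy⟩
  choose F hF using key
  refine ⟨fun k Us => if h : Us (Fin.last k) ∈ uniformity Z then F k _ h else ∅, ?_⟩
  intro U hUm z
  have hzmem : z ∈ ⋃ k, A k := hAuniv ▸ Set.mem_univ z
  obtain ⟨m, hm⟩ := Set.mem_iUnion.1 hzmem
  filter_upwards [Filter.eventually_ge_atTop m] with k hk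
  have hzk : z ∈ A k := Set.monotone_accumulate hk hm
  have hcond : (fun i : Fin (k + 1) => U i) (Fin.last k) ∈ uniformity Z := hUm k
  simp only [dif_pos hcond]
  exact hF k _ hcond z hzk

/-- If `(Y,d)` is an unbounded σ-totally bounded metric space, then every finite power
`Y^n` is σ-totally bounded (and strictly Hurewicz bounded), but `Y^ℕ` with the product
uniformity is not Menger bounded. -/
theorem pi_nat_not_mengerBounded_of_unbounded_sigmaTotallyBounded
    (Y : Type*) [MetricSpace Y]
    (hunb : ¬ Bornology.IsBounded (Set.univ : Set Y))
    (hstb : SigmaTotallyBounded Y) :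
    (∀ n : ℕ, SigmaTotallyBounded (Fin n → Y) ∧
        ∃ σ : HurewiczStrategy (Fin n → Y), HurewiczWinning σ) ∧
      ¬ MengerBounded (ℕ → Y) := by
  classical
  obtain ⟨S, hS, hU⟩ := hstb
  constructor
  · intro n
    have hstbn : SigmaTotallyBounded (Fin n → Y) := by
      refine ⟨fun k => Set.pi univ (fun _ : Fin n => Set.accumulate S k), ?_, ?_⟩
      · intro k
        refine totallyBounded_pi' fun _ => ?_
        have : Set.accumulate S k = ⋃ i ∈ Set.Iic k, S i := rfl
        rw [this]
        exact (totallyBounded_biUnion (Set.finite_Iic k)).2 fun i _ => hS i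
      · apply Set.eq_univ_of_forall
        intro f
        have hf : ∀ i : Fin n, ∃ k, f i ∈ S k := by
          intro i
          have : f i ∈ ⋃ k, S k := hU ▸ Set.mem_univ _
          exact Set.mem_iUnion.1 this
        choose g hg using hf
        rcases isEmpty_or_nonempty (Fin n) with hemp | hne
        · exact Set.mem_iUnion.2 ⟨0, fun i _ => (IsEmpty.false i).elim⟩
        · refine Set.mem_iUnion.2 ⟨Finset.univ.sup' Finset.univ_nonempty g, fun i _ => ?_⟩
          exact Set.monotone_accumulate (Finset.le_sup' g (Finset.mem_univ i))
            (Set.subset_accumulate (hg i))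
    exact ⟨hstbn, exists_hurewiczWinning hstbn⟩
  · intro hM
    set U : ℕ → Set ((ℕ → Y) × (ℕ → Y)) :=
      fun n => (fun a : (ℕ → Y) × (ℕ → Y) => (a.1 n, a.2 n)) ⁻¹' {p : Y × Y | dist p.1 p.2 < 1}
      with hUdef
    have hUm : ∀ n, U n ∈ uniformity (ℕ → Y) := by
      intro n
      rw [Pi.uniformity]
      exact Filter.mem_iInf_of_mem n
        (Filter.preimage_mem_comap (Metric.dist_mem_uniformity one_pos))
    obtain ⟨F, hF⟩ := hM U hUm
    have hfar : ∀ n : ℕ, ∃ z : Y, ∀ y ∈ (F n).image (fun a => a n), 1 ≤ dist y z :=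
      fun n => exists_far hunb _
    choose z hz using hfar
    obtain ⟨n, a, ha, hUa⟩ := hF z
    have h1 : 1 ≤ dist (a n) (z n) :=
      hz n (a n) (Finset.mem_image_of_mem _ ha)
    have h2 : dist (a n) (z n) < 1 := hUa
    linarith
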